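/- If π is a C-complete (i.e. B-⌣_C-just) path in the restricted model M_C (which forbids overlapping operations according to memory model C) starting in its initial state, then π is also a C-complete path in the unrestricted full-read atomic model M_FR starting in its initial state, for each C ∈ {A, I, S}. -/

import Mathlib

section Basic

variable {S A : Type*}

/-- A finite-or-infinite path: states, actions, and a length in `ℕ∞`. -/
structure RawPath (S A : Type*) where
  states : ℕ → S
  acts : ℕ → A
  len : ℕ∞

/-- An action `a` is enabled in state `s`. -/
def EnabledIn (Tr : S → A → S → Prop) (a : A) (s : S) : Prop := ∃ s', Tr s a s'

/-- `π` is a path of the LTS `Tr` starting in `s0`. -/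
def IsPathOf (Tr : S → A → S → Prop) (s0 : S) (π : RawPath S A) : Prop :=
  π.states 0 = s0 ∧ ∀ i : ℕ, (i : ℕ∞) < π.len → Tr (π.states i) (π.acts i) (π.states (i + 1))

/-- `B`-`conc`-justness: for each suffix of `π`, if a non-blockable action `a` is enabled
in its initial state, then an action interfering with `a` occurs in the suffix. -/
def JustPath (Tr : S → A → S → Prop) (conc : A → A → Prop) (B : Set A)
    (π : RawPath S A) : Prop :=
  ∀ (k : ℕ) (a : A), (k : ℕ∞) ≤ π.len → a ∉ B → EnabledIn Tr a (π.states k) →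
    ∃ j : ℕ, k ≤ j ∧ (j : ℕ∞) < π.len ∧ ¬ conc a (π.acts j)

/-- The number of occurrences of action `a` on the path `π`, in `ℕ∞`. -/
noncomputable def occCount (π : RawPath S A) (a : A) : ℕ∞ :=
  Set.encard {j : ℕ | (j : ℕ∞) < π.len ∧ π.acts j = a}

/-- `w` is the weak trace `ℓ⁻(π)`: the subsequence of `vis`-actions of `π`, in order. -/
def IsEllMinus (vis : A → Prop) (π : RawPath S A) (w : ℕ → Option A) : Prop :=
  ∃ (m : ℕ∞) (f : ℕ → ℕ),
    (∀ i j : ℕ, (i : ℕ∞) < m → (j : ℕ∞) < m → i < j → f i < f j) ∧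
    (∀ i : ℕ, (i : ℕ∞) < m →
      ((f i : ℕ∞) < π.len ∧ vis (π.acts (f i)) ∧ w i = some (π.acts (f i)))) ∧
    (∀ i : ℕ, ¬ (i : ℕ∞) < m → w i = none) ∧
    (∀ j : ℕ, (j : ℕ∞) < π.len → vis (π.acts j) → ∃ i : ℕ, (i : ℕ∞) < m ∧ f i = j)

/-- The set of weak `C`-complete traces of an LTS. -/
def WCT (Tr : S → A → S → Prop) (s0 : S) (Cjust : RawPath S A → Prop) (vis : A → Prop) :
    Set (ℕ → Option A) :=
  {w | ∃ π : RawPath S A, IsPathOf Tr s0 π ∧ Cjust π ∧ IsEllMinus vis π w}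

end Basic

/-- The actions of thread-register models: register interface actions, register-local
order actions, instant reads, and the thread-local actions (crit, noncrit, other). -/
inductive RWAct (T R : Type) (D : R → Type) : Type
  | startRead  (t : T) (r : R)
  | orderRead  (t : T) (r : R)
  | finishRead (t : T) (r : R) (d : D r)
  | startWrite (t : T) (r : R) (d : D r)
  | orderWrite (t : T) (r : R)
  | finishWrite (t : T) (r : R)
  | read (t : T) (r : R) (d : D r)
  | crit (t : T)
  | noncrit (t : T)
  | tloc (t : T) (n : ℕ)

namespace RWAct

variable {T R : Type} {D : R → Type}

/-- The thread id of an action. -/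
def thr : RWAct T R D → T
  | startRead t _ => t
  | orderRead t _ => t
  | finishRead t _ _ => t
  | startWrite t _ _ => t
  | orderWrite t _ => t
  | finishWrite t _ => t
  | read t _ _ => t
  | crit t => t
  | noncrit t => t
  | tloc t _ => t

/-- The register id of an action (`none` for thread-local actions). -/
def regOf : RWAct T R D → Option R
  | startRead _ r => some r
  | orderRead _ r => some r
  | finishRead _ r _ => some r
  | startWrite _ r _ => some r
  | orderWrite _ r => some r
  | finishWrite _ r => some r
  | read _ r _ => some r
  | crit _ => none
  | noncrit _ => none
  | tloc _ _ => none

/-- Actions belonging to the alphabet of a thread (all but the register-local order actions). -/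
def isThreadAct : RWAct T R D → Prop
  | orderRead _ _ => False
  | orderWrite _ _ => False
  | _ => True

/-- `read?`: `a` is the start of a read operation on register `r`. -/
def isReadStart (r : R) : RWAct T R D → Prop
  | startRead _ r' => r' = r
  | read _ r' _ => r' = r
  | _ => False

/-- `write?`: `a` is the start of a write operation on register `r`. -/
def isWriteStart (r : R) : RWAct T R D → Prop
  | startWrite _ r' _ => r' = r
  | _ => False

/-- `a ∈ start(r)`. -/
def inStart (r : R) (a : RWAct T R D) : Prop := isReadStart r a ∨ isWriteStart r a

/-- The visible actions: `crit` and `noncrit`. -/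
def IsVis : RWAct T R D → Prop
  | crit _ => True
  | noncrit _ => True
  | _ => False

/-- `a` is an (instant) read action. -/
def isReadAct : RWAct T R D → Prop
  | read _ _ _ => True
  | _ => False

end RWAct

/-- The local state of a register. -/
structure RegState (T D : Type) where
  stor : D
  rds : Set T
  wrts : Set T
  pend : Set T
  recv : T → D

/-- The four memory models: `FR` (arbitrary overlap), `A` (blocking reads and writes),
`I` (blocking model with concurrent reads), `S` (blocking writes, non-blocking reads). -/
inductive OverlapMode : Type
  | FR | A | I | S

/-- The guard for start-read actions in each memory model. -/
def gRead {T D : Type} : OverlapMode → RegState T D → T → Prop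
  | OverlapMode.FR, s, t => t ∉ s.rds ∧ t ∉ s.wrts
  | OverlapMode.A, s, _ => s.rds = ∅ ∧ s.wrts = ∅
  | OverlapMode.I, s, t => t ∉ s.rds ∧ s.wrts = ∅
  | OverlapMode.S, s, t => t ∉ s.rds ∧ s.wrts = ∅

/-- The guard for start-write actions in each memory model. -/
def gWrite {T D : Type} : OverlapMode → RegState T D → T → Prop
  | OverlapMode.FR, s, t => t ∉ s.rds ∧ t ∉ s.wrts
  | OverlapMode.A, s, _ => s.rds = ∅ ∧ s.wrts = ∅
  | OverlapMode.I, s, _ => s.rds = ∅ ∧ s.wrts = ∅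
  | OverlapMode.S, s, _ => s.wrts = ∅

/-- A family of thread LTSs, one per thread id. -/
structure ThreadSys (T R : Type) (D : R → Type) where
  TS : T → Type
  init : ∀ t, TS t
  tr : ∀ t, TS t → RWAct T R D → TS t → Prop

/-- A state of the thread-register model: a state per thread and per register. -/
structure MState {T R : Type} {D : R → Type} (Θ : ThreadSys T R D) where
  th : ∀ t, Θ.TS t
  rg : ∀ r, RegState T (D r)

section Comp

variable {T R : Type} {D : R → Type} [DecidableEq T]

/-- The thread interference relation `⌣_T`. -/
def concT (a b : RWAct T R D) : Prop := a.thr ≠ b.thr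

/-- The signalling reads relation `⌣_S`. -/
def concS (a b : RWAct T R D) : Prop :=
  concT a b ∧ ¬ ∃ r, RWAct.inStart r a ∧ RWAct.isWriteStart r b

/-- The interfering reads relation `⌣_I`. -/
def concI (a b : RWAct T R D) : Prop :=
  concS a b ∧ ¬ ∃ r, RWAct.isWriteStart r a ∧ RWAct.isReadStart r b

/-- The all interfering relation `⌣_A`. -/
def concA (a b : RWAct T R D) : Prop :=
  concI a b ∧ ¬ ∃ r, RWAct.isReadStart r a ∧ RWAct.isReadStart r b

/-- The concurrency relation matching each memory model. -/
def concOf : OverlapMode → RWAct T R D → RWAct T R D → Prop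
  | OverlapMode.FR => concT
  | OverlapMode.A => concA
  | OverlapMode.I => concI
  | OverlapMode.S => concS

/-- The blockable actions: a thread may stay in its non-critical section forever. -/
def Blk : Set (RWAct T R D) := {a | ∃ t : T, a = RWAct.noncrit t}

/-- The full-read atomic register LTS for register `r` (with start guards given by the
memory model `mode`; `FR` is the unrestricted model). -/
inductive AtoTrans (mode : OverlapMode) (r : R) :
    RegState T (D r) → RWAct T R D → RegState T (D r) → Prop
  | startRead (s : RegState T (D r)) (t : T) (h : gRead mode s t) :
      AtoTrans mode r s (RWAct.startRead t r)
        { s with rds := insert t s.rds, pend := insert t s.pend }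
  | orderRead (s : RegState T (D r)) (t : T) (h1 : t ∈ s.rds) (h2 : t ∈ s.pend) :
      AtoTrans mode r s (RWAct.orderRead t r)
        { s with pend := s.pend \ {t}, recv := Function.update s.recv t s.stor }
  | finishRead (s : RegState T (D r)) (t : T) (h1 : t ∈ s.rds) (h2 : t ∉ s.pend) :
      AtoTrans mode r s (RWAct.finishRead t r (s.recv t)) { s with rds := s.rds \ {t} }
  | startWrite (s : RegState T (D r)) (t : T) (d : D r) (h : gWrite mode s t) :
      AtoTrans mode r s (RWAct.startWrite t r d)
        { s with wrts := insert t s.wrts, pend := insert t s.pend,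
                 recv := Function.update s.recv t d }
  | orderWrite (s : RegState T (D r)) (t : T) (h1 : t ∈ s.wrts) (h2 : t ∈ s.pend) :
      AtoTrans mode r s (RWAct.orderWrite t r)
        { s with pend := s.pend \ {t}, stor := s.recv t }
  | finishWrite (s : RegState T (D r)) (t : T) (h1 : t ∈ s.wrts) (h2 : t ∉ s.pend) :
      AtoTrans mode r s (RWAct.finishWrite t r) { s with wrts := s.wrts \ {t} }

/-- The instant-read atomic register LTS for register `r`. -/
inductive IRAtoTrans (r : R) :
    RegState T (D r) → RWAct T R D → RegState T (D r) → Prop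
  | read (s : RegState T (D r)) (t : T) (h : t ∉ s.wrts) :
      IRAtoTrans r s (RWAct.read t r s.stor) s
  | startWrite (s : RegState T (D r)) (t : T) (d : D r) (h : t ∉ s.wrts) :
      IRAtoTrans r s (RWAct.startWrite t r d)
        { s with wrts := insert t s.wrts, pend := insert t s.pend,
                 recv := Function.update s.recv t d }
  | orderWrite (s : RegState T (D r)) (t : T) (h1 : t ∈ s.wrts) (h2 : t ∈ s.pend) :
      IRAtoTrans r s (RWAct.orderWrite t r)
        { s with pend := s.pend \ {t}, stor := s.recv t }
  | finishWrite (s : RegState T (D r)) (t : T) (h1 : t ∈ s.wrts) (h2 : t ∉ s.pend) :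
      IRAtoTrans r s (RWAct.finishWrite t r) { s with wrts := s.wrts \ {t} }

/-- The requirements on (full-read) thread LTSs: threads only perform their own
thread-type actions; after invoking a read they only await its response and accept all
domain values; after invoking a write they only await its response; and operation
responses occur only immediately after the matching invocation. -/
def ThreadSys.Good (Θ : ThreadSys T R D) : Prop :=
  (∀ t (s : Θ.TS t) a s', Θ.tr t s a s' → RWAct.thr a = t ∧ RWAct.isThreadAct a) ∧
  (∀ t (s s' : Θ.TS t) t' r (d : D r), ¬ Θ.tr t s (RWAct.read t' r d) s') ∧
  (∀ t r (s m : Θ.TS t), Θ.tr t s (RWAct.startRead t r) m →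
      (∀ d : D r, ∃ s', Θ.tr t m (RWAct.finishRead t r d) s') ∧
      (∀ a s', Θ.tr t m a s' → ∃ d : D r, a = RWAct.finishRead t r d)) ∧
  (∀ t r (d : D r) (s m : Θ.TS t), Θ.tr t s (RWAct.startWrite t r d) m →
      (∃ s', Θ.tr t m (RWAct.finishWrite t r) s') ∧
      (∀ a s', Θ.tr t m a s' → a = RWAct.finishWrite t r)) ∧
  (∀ t r (d : D r) (s s' : Θ.TS t), Θ.tr t s (RWAct.finishRead t r d) s' →
      ∀ (s0 : Θ.TS t) a, Θ.tr t s0 a s → a = RWAct.startRead t r) ∧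
  (∀ t r (s s' : Θ.TS t), Θ.tr t s (RWAct.finishWrite t r) s' →
      ∀ (s0 : Θ.TS t) a, Θ.tr t s0 a s → ∃ d : D r, a = RWAct.startWrite t r d)

/-- The instant-read transform of a full-read thread system: each instant read action
abbreviates a start-read immediately followed by the matching finish-read. -/
def ThreadSys.toIR (Θ : ThreadSys T R D) : ThreadSys T R D :=
  { TS := Θ.TS
    init := Θ.init
    tr := fun t s a s' =>
      ((∀ t' r, a ≠ RWAct.startRead t' r) ∧
       (∀ t' r (d : D r), a ≠ RWAct.finishRead t' r d) ∧
       Θ.tr t s a s') ∨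
      (∃ (r : R) (d : D r) (m : Θ.TS t), a = RWAct.read t r d ∧
         Θ.tr t s (RWAct.startRead t r) m ∧ Θ.tr t m (RWAct.finishRead t r d) s') }

/-- The CSP-style parallel composition of the thread LTSs with the (full-read) atomic
register LTSs, for the memory model `mode`. -/
def MTrans (mode : OverlapMode) (Θ : ThreadSys T R D) :
    MState Θ → RWAct T R D → MState Θ → Prop := fun s a s' =>
  (∀ t, (RWAct.thr a = t ∧ RWAct.isThreadAct a → Θ.tr t (s.th t) a (s'.th t)) ∧
        (¬ (RWAct.thr a = t ∧ RWAct.isThreadAct a) → s'.th t = s.th t)) ∧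
  (∀ r, (RWAct.regOf a = some r → AtoTrans mode r (s.rg r) a (s'.rg r)) ∧
        (RWAct.regOf a ≠ some r → s'.rg r = s.rg r))

/-- The CSP-style parallel composition with the instant-read atomic register LTSs. -/
def MTransIR (Θ : ThreadSys T R D) :
    MState Θ → RWAct T R D → MState Θ → Prop := fun s a s' =>
  (∀ t, (RWAct.thr a = t ∧ RWAct.isThreadAct a → Θ.tr t (s.th t) a (s'.th t)) ∧
        (¬ (RWAct.thr a = t ∧ RWAct.isThreadAct a) → s'.th t = s.th t)) ∧
  (∀ r, (RWAct.regOf a = some r → IRAtoTrans r (s.rg r) a (s'.rg r)) ∧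
        (RWAct.regOf a ≠ some r → s'.rg r = s.rg r))

/-- The initial state of the thread-register model, with register initial values `d0`. -/
def Minit (Θ : ThreadSys T R D) (d0 : ∀ r, D r) : MState Θ :=
  { th := Θ.init
    rg := fun r => { stor := d0 r, rds := ∅, wrts := ∅, pend := ∅, recv := fun _ => d0 r } }

/-- `a` is thread-enabled by `π`: only finitely many actions of `a`'s thread occur on
`π`, and `a` is enabled in the component state of that thread after its last action. -/
def ThreadEnabled (Θ : ThreadSys T R D) (π : RawPath (MState Θ) (RWAct T R D))
    (a : RWAct T R D) : Prop :=
  ∃ k : ℕ, (k : ℕ∞) ≤ π.len ∧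
    (∀ j : ℕ, k ≤ j → (j : ℕ∞) < π.len → RWAct.thr (π.acts j) ≠ RWAct.thr a) ∧
    ∃ s', Θ.tr (RWAct.thr a) ((π.states k).th (RWAct.thr a)) a s'

/-- `π'` arises from `π` by the `i2f` transformation on action sequences: each instant
read is replaced by the sequence start-read · order-read · finish-read, other actions
are kept. -/
def IsI2F {S₁ S₂ : Type*} (π : RawPath S₁ (RWAct T R D)) (π' : RawPath S₂ (RWAct T R D)) :
    Prop :=
  ∃ f : ℕ → ℕ, f 0 = 0 ∧
    (∀ k : ℕ, (k : ℕ∞) < π.len →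
      ((¬ RWAct.isReadAct (π.acts k) ∧ π'.acts (f k) = π.acts k ∧ f (k + 1) = f k + 1) ∨
       (∃ (t : T) (r : R) (d : D r), π.acts k = RWAct.read t r d ∧
          π'.acts (f k) = RWAct.startRead t r ∧
          π'.acts (f k + 1) = RWAct.orderRead t r ∧
          π'.acts (f k + 2) = RWAct.finishRead t r d ∧
          f (k + 1) = f k + 3))) ∧
    (π.len = ⊤ → π'.len = ⊤) ∧
    (∀ n : ℕ, π.len = (n : ℕ∞) → π'.len = ((f n : ℕ) : ℕ∞))

end Comp
section Aux
set_option linter.unusedSectionVars false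

variable {T R : Type} {D : R → Type} [DecidableEq T]

/-! ### ℕ∞ helpers -/

lemma enat_succ_le {i : ℕ} {L : ℕ∞} (h : (i : ℕ∞) < L) : ((i + 1 : ℕ) : ℕ∞) ≤ L := by
  have := (ENat.add_one_le_iff (ENat.coe_ne_top i)).mpr h
  exact_mod_cast this

lemma enat_lt_of_succ_le {i : ℕ} {L : ℕ∞} (h : ((i + 1 : ℕ) : ℕ∞) ≤ L) : (i : ℕ∞) < L := by
  apply (ENat.add_one_le_iff (ENat.coe_ne_top i)).mp
  exact_mod_cast h

lemma enat_lt_of_lt_le {i j : ℕ} {L : ℕ∞} (h1 : i < j) (h2 : (j : ℕ∞) ≤ L) : (i : ℕ∞) < L :=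
  lt_of_lt_of_le (by exact_mod_cast h1) h2

/-! ### concurrency relation lemmas -/

lemma thr_ne_of_concOf {mode : OverlapMode} {a b : RWAct T R D} (h : concOf mode a b) :
    a.thr ≠ b.thr := by
  cases mode with
  | FR => exact h
  | A => exact h.1.1.1
  | I => exact h.1.1
  | S => exact h.1

lemma concOf_of_thr {a b : RWAct T R D} (hns : ∀ q, ¬ a.inStart q) (h : a.thr ≠ b.thr)
    (mode : OverlapMode) : concOf mode a b := by
  have hws : ∀ q, ¬ a.isWriteStart q := fun q hq => hns q (Or.inr hq)
  have hrs : ∀ q, ¬ a.isReadStart q := fun q hq => hns q (Or.inl hq)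
  have hS : concS a b := ⟨h, fun ⟨q, h1, _⟩ => hns q h1⟩
  have hI : concI a b := ⟨hS, fun ⟨q, h1, _⟩ => hws q h1⟩
  have hA : concA a b := ⟨hI, fun ⟨q, h1, _⟩ => hrs q h1⟩
  cases mode with
  | FR => exact h
  | A => exact hA
  | I => exact hI
  | S => exact hS

lemma no_ws_of_concOf {mode : OverlapMode} (hm : mode ≠ OverlapMode.FR) {a b : RWAct T R D}
    {q : R} (ha : a.inStart q) (h : concOf mode a b) : ¬ b.isWriteStart q := by
  cases mode with
  | FR => exact absurd rfl hm
  | A => exact fun hb => h.1.1.2 ⟨q, ha, hb⟩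
  | I => exact fun hb => h.1.2 ⟨q, ha, hb⟩
  | S => exact fun hb => h.2 ⟨q, ha, hb⟩

lemma no_rs_of_concA {a b : RWAct T R D} {q : R} (ha : a.isReadStart q) (h : concA a b) :
    ¬ b.isReadStart q := fun hb => h.2 ⟨q, ha, hb⟩

lemma no_rs_of_concA_w {a b : RWAct T R D} {q : R} (ha : a.isWriteStart q) (h : concA a b) :
    ¬ b.isReadStart q := fun hb => h.1.2 ⟨q, ha, hb⟩

lemma no_rs_of_concI_w {a b : RWAct T R D} {q : R} (ha : a.isWriteStart q) (h : concI a b) :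
    ¬ b.isReadStart q := fun hb => h.2 ⟨q, ha, hb⟩

/-! ### register transition inversion -/

lemma ato_inv {mode : OverlapMode} {r : R} {s1 s2 : RegState T (D r)} {b : RWAct T R D}
    (h : AtoTrans mode r s1 b s2) :
    (∃ t, b = RWAct.startRead t r ∧ gRead mode s1 t ∧
        s2 = { s1 with rds := insert t s1.rds, pend := insert t s1.pend }) ∨
    (∃ t, b = RWAct.orderRead t r ∧ t ∈ s1.rds ∧ t ∈ s1.pend ∧
        s2 = { s1 with pend := s1.pend \ {t}, recv := Function.update s1.recv t s1.stor }) ∨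
    (∃ t, b = RWAct.finishRead t r (s1.recv t) ∧ t ∈ s1.rds ∧ t ∉ s1.pend ∧
        s2 = { s1 with rds := s1.rds \ {t} }) ∨
    (∃ t d, b = RWAct.startWrite t r d ∧ gWrite mode s1 t ∧
        s2 = { s1 with wrts := insert t s1.wrts, pend := insert t s1.pend,
                       recv := Function.update s1.recv t d }) ∨
    (∃ t, b = RWAct.orderWrite t r ∧ t ∈ s1.wrts ∧ t ∈ s1.pend ∧
        s2 = { s1 with pend := s1.pend \ {t}, stor := s1.recv t }) ∨
    (∃ t, b = RWAct.finishWrite t r ∧ t ∈ s1.wrts ∧ t ∉ s1.pend ∧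
        s2 = { s1 with wrts := s1.wrts \ {t} }) := by
  cases h with
  | startRead t hg => exact Or.inl ⟨t, rfl, hg, rfl⟩
  | orderRead t h1 h2 => exact Or.inr (Or.inl ⟨t, rfl, h1, h2, rfl⟩)
  | finishRead t h1 h2 => exact Or.inr (Or.inr (Or.inl ⟨t, rfl, h1, h2, rfl⟩))
  | startWrite t d hg => exact Or.inr (Or.inr (Or.inr (Or.inl ⟨t, d, rfl, hg, rfl⟩)))
  | orderWrite t h1 h2 => exact Or.inr (Or.inr (Or.inr (Or.inr (Or.inl ⟨t, rfl, h1, h2, rfl⟩))))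
  | finishWrite t h1 h2 => exact Or.inr (Or.inr (Or.inr (Or.inr (Or.inr ⟨t, rfl, h1, h2, rfl⟩))))

lemma ato_startRead_inv {mode : OverlapMode} {r : R} {s1 s2 : RegState T (D r)} {u : T}
    (h : AtoTrans mode r s1 (RWAct.startRead u r) s2) :
    gRead mode s1 u ∧ s2 = { s1 with rds := insert u s1.rds, pend := insert u s1.pend } := by
  rcases ato_inv h with ⟨t, heq, hg, hs⟩ | ⟨t, heq, -⟩ | ⟨t, heq, -⟩ | ⟨t, d, heq, -⟩ |
    ⟨t, heq, -⟩ | ⟨t, heq, -⟩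
  · injection heq with h1 h2; subst h1; exact ⟨hg, hs⟩
  all_goals simp at heq

lemma ato_orderRead_inv {mode : OverlapMode} {r : R} {s1 s2 : RegState T (D r)} {u : T}
    (h : AtoTrans mode r s1 (RWAct.orderRead u r) s2) :
    u ∈ s1.rds ∧ u ∈ s1.pend ∧
      s2 = { s1 with pend := s1.pend \ {u}, recv := Function.update s1.recv u s1.stor } := by
  rcases ato_inv h with ⟨t, heq, -⟩ | ⟨t, heq, h1, h2, hs⟩ | ⟨t, heq, -⟩ | ⟨t, d, heq, -⟩ |
    ⟨t, heq, -⟩ | ⟨t, heq, -⟩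
  case inr.inl => injection heq with ha hb; subst ha; exact ⟨h1, h2, hs⟩
  all_goals simp at heq

lemma ato_finishRead_inv {mode : OverlapMode} {r : R} {s1 s2 : RegState T (D r)} {u : T}
    {d : D r} (h : AtoTrans mode r s1 (RWAct.finishRead u r d) s2) :
    u ∈ s1.rds ∧ u ∉ s1.pend ∧ s2 = { s1 with rds := s1.rds \ {u} } := by
  rcases ato_inv h with ⟨t, heq, -⟩ | ⟨t, heq, -⟩ | ⟨t, heq, h1, h2, hs⟩ | ⟨t, d', heq, -⟩ |
    ⟨t, heq, -⟩ | ⟨t, heq, -⟩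
  case inr.inr.inl => injection heq with ha hb hc; subst ha; exact ⟨h1, h2, hs⟩
  all_goals simp at heq

lemma ato_startWrite_inv {mode : OverlapMode} {r : R} {s1 s2 : RegState T (D r)} {u : T}
    {d : D r} (h : AtoTrans mode r s1 (RWAct.startWrite u r d) s2) :
    gWrite mode s1 u ∧ s2 = { s1 with wrts := insert u s1.wrts, pend := insert u s1.pend,
                                      recv := Function.update s1.recv u d } := by
  rcases ato_inv h with ⟨t, heq, -⟩ | ⟨t, heq, -⟩ | ⟨t, heq, -⟩ | ⟨t, d', heq, hg, hs⟩ |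
    ⟨t, heq, -⟩ | ⟨t, heq, -⟩
  case inr.inr.inr.inl =>
    injection heq with ha hb hc; subst ha; subst hc; exact ⟨hg, hs⟩
  all_goals simp at heq

lemma ato_orderWrite_inv {mode : OverlapMode} {r : R} {s1 s2 : RegState T (D r)} {u : T}
    (h : AtoTrans mode r s1 (RWAct.orderWrite u r) s2) :
    u ∈ s1.wrts ∧ u ∈ s1.pend ∧
      s2 = { s1 with pend := s1.pend \ {u}, stor := s1.recv u } := by
  rcases ato_inv h with ⟨t, heq, -⟩ | ⟨t, heq, -⟩ | ⟨t, heq, -⟩ | ⟨t, d, heq, -⟩ |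
    ⟨t, heq, h1, h2, hs⟩ | ⟨t, heq, -⟩
  case inr.inr.inr.inr.inl => injection heq with ha hb; subst ha; exact ⟨h1, h2, hs⟩
  all_goals simp at heq

lemma ato_finishWrite_inv {mode : OverlapMode} {r : R} {s1 s2 : RegState T (D r)} {u : T}
    (h : AtoTrans mode r s1 (RWAct.finishWrite u r) s2) :
    u ∈ s1.wrts ∧ u ∉ s1.pend ∧ s2 = { s1 with wrts := s1.wrts \ {u} } := by
  rcases ato_inv h with ⟨t, heq, -⟩ | ⟨t, heq, -⟩ | ⟨t, heq, -⟩ | ⟨t, d, heq, -⟩ |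
    ⟨t, heq, -⟩ | ⟨t, heq, h1, h2, hs⟩
  case inr.inr.inr.inr.inr => injection heq with ha hb; subst ha; exact ⟨h1, h2, hs⟩
  all_goals simp at heq

lemma ato_read_inv {mode : OverlapMode} {r : R} {s1 s2 : RegState T (D r)} {u : T} {d : D r}
    (h : AtoTrans mode r s1 (RWAct.read u r d) s2) : False := by
  rcases ato_inv h with ⟨t, heq, -⟩ | ⟨t, heq, -⟩ | ⟨t, heq, -⟩ | ⟨t, d', heq, -⟩ |
    ⟨t, heq, -⟩ | ⟨t, heq, -⟩
  all_goals simp at heq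

/-! ### guards -/

lemma gRead_FR {mode : OverlapMode} {E : Type} {s1 : RegState T E} {t : T}
    (h : gRead mode s1 t) : t ∉ s1.rds ∧ t ∉ s1.wrts := by
  cases mode <;> simp_all [gRead]

lemma gWrite_wrts {mode : OverlapMode} {E : Type} {s1 : RegState T E} {t : T}
    (h : gWrite mode s1 t) : t ∉ s1.wrts := by
  cases mode <;> simp_all [gWrite]

end Aux
section Aux2
set_option linter.unusedSectionVars false
set_option maxHeartbeats 1000000

variable {T R : Type} {D : R → Type} [DecidableEq T]

/-! ### the invariant -/

def MidR (Θ : ThreadSys T R D) (t : T) (r : R) (s : MState Θ) : Prop :=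
  (∀ d : D r, ∃ s', Θ.tr t (s.th t) (RWAct.finishRead t r d) s') ∧
  (∀ b s', Θ.tr t (s.th t) b s' → ∃ d : D r, b = RWAct.finishRead t r d)

def MidW (Θ : ThreadSys T R D) (t : T) (r : R) (s : MState Θ) : Prop :=
  (∃ s', Θ.tr t (s.th t) (RWAct.finishWrite t r) s') ∧
  (∀ b s', Θ.tr t (s.th t) b s' → b = RWAct.finishWrite t r)

def Busy {Θ : ThreadSys T R D} (t : T) (r : R) (s : MState Θ) : Prop :=
  t ∈ (s.rg r).rds ∨ t ∈ (s.rg r).wrts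

def MInv (Θ : ThreadSys T R D) (s : MState Θ) : Prop :=
  (∀ r, ((s.rg r).rds ∪ (s.rg r).wrts).Finite) ∧
  (∀ t r, t ∈ (s.rg r).rds →
    t ∉ (s.rg r).wrts ∧ (∀ r', r' ≠ r → ¬ Busy t r' s) ∧ MidR Θ t r s) ∧
  (∀ t r, t ∈ (s.rg r).wrts →
    t ∉ (s.rg r).rds ∧ (∀ r', r' ≠ r → ¬ Busy t r' s) ∧ MidW Θ t r s)

lemma busy_congr {Θ : ThreadSys T R D} {s s' : MState Θ} {t : T} {r : R}
    (h : s'.rg r = s.rg r) : Busy t r s' ↔ Busy t r s := by simp [Busy, h]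

lemma midR_congr {Θ : ThreadSys T R D} {s s' : MState Θ} {t : T} {r : R}
    (h : s'.th t = s.th t) : MidR Θ t r s ↔ MidR Θ t r s' := by simp [MidR, h]

lemma midW_congr {Θ : ThreadSys T R D} {s s' : MState Θ} {t : T} {r : R}
    (h : s'.th t = s.th t) : MidW Θ t r s ↔ MidW Θ t r s' := by simp [MidW, h]

lemma not_busy_of_tr {Θ : ThreadSys T R D} {s : MState Θ} (hI : MInv Θ s) {t : T}
    {b : RWAct T R D} {s₁ : Θ.TS t} (htr : Θ.tr t (s.th t) b s₁)
    (h1 : ∀ q d, b ≠ RWAct.finishRead t q d) (h2 : ∀ q, b ≠ RWAct.finishWrite t q) :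
    ∀ r, ¬ Busy t r s := by
  rintro r (h | h)
  · obtain ⟨d, hd⟩ := (hI.2.1 t r h).2.2.2 b s₁ htr
    exact h1 r d hd
  · exact h2 r ((hI.2.2 t r h).2.2.2 b s₁ htr)

lemma inv_init (Θ : ThreadSys T R D) (d0 : ∀ r, D r) : MInv Θ (Minit Θ d0) := by
  refine ⟨fun r => ?_, fun t r ht => ?_, fun t r ht => ?_⟩ <;>
    simp [Minit] at *

/-- Generic preservation: thread states change only at non-busy threads, register
read/write sets shrink. -/
lemma inv_of_subset {Θ : ThreadSys T R D} {s s' : MState Θ} (hI : MInv Θ s)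
    (hth : ∀ t, (∀ r, ¬ Busy t r s') ∨ s'.th t = s.th t)
    (hrg : ∀ r, (s'.rg r).rds ⊆ (s.rg r).rds ∧ (s'.rg r).wrts ⊆ (s.rg r).wrts) :
    MInv Θ s' := by
  refine ⟨fun r => (hI.1 r).subset (Set.union_subset_union (hrg r).1 (hrg r).2), ?_, ?_⟩
  · intro t r ht
    obtain ⟨h1, h2, h3⟩ := hI.2.1 t r ((hrg r).1 ht)
    have hth' : s'.th t = s.th t := (hth t).resolve_left fun h => h r (Or.inl ht)
    refine ⟨fun hc => h1 ((hrg r).2 hc), fun r' hne hb => h2 r' hne ?_, (midR_congr hth').mp h3⟩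
    rcases hb with hb | hb
    exacts [Or.inl ((hrg r').1 hb), Or.inr ((hrg r').2 hb)]
  · intro t r ht
    obtain ⟨h1, h2, h3⟩ := hI.2.2 t r ((hrg r).2 ht)
    have hth' : s'.th t = s.th t := (hth t).resolve_left fun h => h r (Or.inr ht)
    refine ⟨fun hc => h1 ((hrg r).1 hc), fun r' hne hb => h2 r' hne ?_, (midW_congr hth').mp h3⟩
    rcases hb with hb | hb
    exacts [Or.inl ((hrg r').1 hb), Or.inr ((hrg r').2 hb)]

/-- Preservation for a start-read by thread `u` on register `q`. -/
lemma inv_startR {Θ : ThreadSys T R D} {s s' : MState Θ} (hI : MInv Θ s) {u : T} {q : R}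
    (hub : ∀ r, ¬ Busy u r s)
    (hthk : ∀ t, t ≠ u → s'.th t = s.th t)
    (hMR : MidR Θ u q s')
    (hrdsq : (s'.rg q).rds = insert u (s.rg q).rds)
    (hrds : ∀ r, r ≠ q → (s'.rg r).rds = (s.rg r).rds)
    (hwrts : ∀ r, (s'.rg r).wrts = (s.rg r).wrts) : MInv Θ s' := by
  have hbusy : ∀ t r, t ≠ u → (Busy t r s' ↔ Busy t r s) := by
    intro t r htu
    by_cases h : r = q
    · subst h
      simp only [Busy, hrdsq, hwrts, Set.mem_insert_iff, htu, false_or]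
    · simp only [Busy, hrds r h, hwrts]
  refine ⟨fun r => ?_, ?_, ?_⟩
  · by_cases h : r = q
    · subst h
      rw [hrdsq, hwrts, Set.insert_union]
      exact ((hI.1 r).insert u)
    · rw [hrds r h, hwrts]; exact hI.1 r
  · intro t r ht
    by_cases h : r = q
    · subst h
      rw [hrdsq, Set.mem_insert_iff] at ht
      rcases ht with rfl | ht
      · refine ⟨?_, ?_, hMR⟩
        · rw [hwrts]; exact fun hc => hub r (Or.inr hc)
        · intro r' hne hb
          apply hub r'
          rcases hb with hb | hb
          · exact Or.inl ((hrds r' hne) ▸ hb)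
          · exact Or.inr ((hwrts r') ▸ hb)
      · obtain ⟨h1, h2, h3⟩ := hI.2.1 t r ht
        have htu : t ≠ u := fun hc => hub r (Or.inl (hc ▸ ht))
        refine ⟨by rw [hwrts]; exact h1, fun r' hne => ?_, (midR_congr (hthk t htu)).mp h3⟩
        rw [hbusy t r' htu]; exact h2 r' hne
    · rw [hrds r h] at ht
      obtain ⟨h1, h2, h3⟩ := hI.2.1 t r ht
      have htu : t ≠ u := fun hc => hub r (Or.inl (hc ▸ ht))
      refine ⟨by rw [hwrts]; exact h1, fun r' hne => ?_, (midR_congr (hthk t htu)).mp h3⟩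
      rw [hbusy t r' htu]; exact h2 r' hne
  · intro t r ht
    rw [hwrts] at ht
    obtain ⟨h1, h2, h3⟩ := hI.2.2 t r ht
    have htu : t ≠ u := fun hc => hub r (Or.inr (hc ▸ ht))
    refine ⟨?_, fun r' hne => ?_, (midW_congr (hthk t htu)).mp h3⟩
    · by_cases h : r = q
      · subst h; rw [hrdsq, Set.mem_insert_iff]
        rintro (rfl | hc); exacts [htu rfl, h1 hc]
      · rw [hrds r h]; exact h1
    · rw [hbusy t r' htu]; exact h2 r' hne

/-- Preservation for a start-write by thread `u` on register `q`. -/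
lemma inv_startW {Θ : ThreadSys T R D} {s s' : MState Θ} (hI : MInv Θ s) {u : T} {q : R}
    (hub : ∀ r, ¬ Busy u r s)
    (hthk : ∀ t, t ≠ u → s'.th t = s.th t)
    (hMW : MidW Θ u q s')
    (hwrtsq : (s'.rg q).wrts = insert u (s.rg q).wrts)
    (hwrts : ∀ r, r ≠ q → (s'.rg r).wrts = (s.rg r).wrts)
    (hrds : ∀ r, (s'.rg r).rds = (s.rg r).rds) : MInv Θ s' := by
  have hbusy : ∀ t r, t ≠ u → (Busy t r s' ↔ Busy t r s) := by
    intro t r htu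
    by_cases h : r = q
    · subst h
      simp only [Busy, hwrtsq, hrds, Set.mem_insert_iff, htu, false_or]
    · simp only [Busy, hwrts r h, hrds]
  refine ⟨fun r => ?_, ?_, ?_⟩
  · by_cases h : r = q
    · subst h
      rw [hwrtsq, hrds, Set.union_insert]
      exact ((hI.1 r).insert u)
    · rw [hwrts r h, hrds]; exact hI.1 r
  · intro t r ht
    rw [hrds] at ht
    obtain ⟨h1, h2, h3⟩ := hI.2.1 t r ht
    have htu : t ≠ u := fun hc => hub r (Or.inl (hc ▸ ht))
    refine ⟨?_, fun r' hne => ?_, (midR_congr (hthk t htu)).mp h3⟩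
    · by_cases h : r = q
      · subst h; rw [hwrtsq, Set.mem_insert_iff]
        rintro (rfl | hc); exacts [htu rfl, h1 hc]
      · rw [hwrts r h]; exact h1
    · rw [hbusy t r' htu]; exact h2 r' hne
  · intro t r ht
    by_cases h : r = q
    · subst h
      rw [hwrtsq, Set.mem_insert_iff] at ht
      rcases ht with rfl | ht
      · refine ⟨?_, ?_, hMW⟩
        · rw [hrds]; exact fun hc => hub r (Or.inl hc)
        · intro r' hne hb
          apply hub r'
          rcases hb with hb | hb
          · exact Or.inl ((hrds r') ▸ hb)
          · exact Or.inr ((hwrts r' hne) ▸ hb)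
      · obtain ⟨h1, h2, h3⟩ := hI.2.2 t r ht
        have htu : t ≠ u := fun hc => hub r (Or.inr (hc ▸ ht))
        refine ⟨by rw [hrds]; exact h1, fun r' hne => ?_, (midW_congr (hthk t htu)).mp h3⟩
        rw [hbusy t r' htu]; exact h2 r' hne
    · rw [hwrts r h] at ht
      obtain ⟨h1, h2, h3⟩ := hI.2.2 t r ht
      have htu : t ≠ u := fun hc => hub r (Or.inr (hc ▸ ht))
      refine ⟨by rw [hrds]; exact h1, fun r' hne => ?_, (midW_congr (hthk t htu)).mp h3⟩
      rw [hbusy t r' htu]; exact h2 r' hne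

end Aux2
section Aux3
set_option linter.unusedSectionVars false
set_option maxHeartbeats 1000000

variable {T R : Type} {D : R → Type} [DecidableEq T]

lemma inv_step {mode : OverlapMode} {Θ : ThreadSys T R D} (hG : Θ.Good)
    {s s' : MState Θ} {b : RWAct T R D}
    (hM : MTrans mode Θ s b s') (hI : MInv Θ s) : MInv Θ s' := by
  obtain ⟨hth, hrg⟩ := hM
  cases b with
  | startRead u q =>
    obtain ⟨hg, hEq⟩ := ato_startRead_inv ((hrg q).1 rfl)
    have htru : Θ.tr u (s.th u) (RWAct.startRead u q) (s'.th u) := (hth u).1 ⟨rfl, trivial⟩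
    have hub : ∀ r, ¬ Busy u r s := not_busy_of_tr hI htru (by simp) (by simp)
    have hkeep : ∀ r, r ≠ q → s'.rg r = s.rg r := fun r h =>
      (hrg r).2 (by simp only [RWAct.regOf, ne_eq, Option.some.injEq]; exact Ne.symm h)
    have hthk : ∀ t, t ≠ u → s'.th t = s.th t := fun t h =>
      (hth t).2 (fun hc => h (hc.1.symm))
    have hMR : MidR Θ u q s' := hG.2.2.1 u q (s.th u) (s'.th u) htru
    exact inv_startR hI hub hthk hMR (by rw [hEq]) (fun r h => by rw [hkeep r h])
      (fun r => by by_cases h : r = q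
                   · subst h; rw [hEq]
                   · rw [hkeep r h])
  | orderRead u q =>
    obtain ⟨h1, h2, hEq⟩ := ato_orderRead_inv ((hrg q).1 rfl)
    have hkeep : ∀ r, r ≠ q → s'.rg r = s.rg r := fun r h =>
      (hrg r).2 (by simp only [RWAct.regOf, ne_eq, Option.some.injEq]; exact Ne.symm h)
    have hth' : ∀ t, s'.th t = s.th t := fun t => (hth t).2 (fun hc => hc.2.elim)
    refine inv_of_subset hI (fun t => Or.inr (hth' t)) (fun r => ?_)
    by_cases h : r = q
    · subst h; rw [hEq]; exact ⟨subset_rfl, subset_rfl⟩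
    · rw [hkeep r h]; exact ⟨subset_rfl, subset_rfl⟩
  | finishRead u q d =>
    obtain ⟨h1, h2, hEq⟩ := ato_finishRead_inv ((hrg q).1 rfl)
    have hkeep : ∀ r, r ≠ q → s'.rg r = s.rg r := fun r h =>
      (hrg r).2 (by simp only [RWAct.regOf, ne_eq, Option.some.injEq]; exact Ne.symm h)
    have hthk : ∀ t, t ≠ u → s'.th t = s.th t := fun t h =>
      (hth t).2 (fun hc => h (hc.1.symm))
    obtain ⟨hd1, hd2, _⟩ := hI.2.1 u q h1
    refine inv_of_subset hI (fun t => ?_) (fun r => ?_)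
    · by_cases h : t = u
      · subst h
        left
        intro r hb
        by_cases hq : r = q
        · subst hq
          rcases hb with hb | hb
          · rw [hEq] at hb; exact hb.2 rfl
          · rw [hEq] at hb; exact hd1 hb
        · rw [busy_congr (hkeep r hq)] at hb; exact hd2 r hq hb
      · exact Or.inr (hthk t h)
    · by_cases h : r = q
      · subst h; rw [hEq]; exact ⟨Set.diff_subset, subset_rfl⟩
      · rw [hkeep r h]; exact ⟨subset_rfl, subset_rfl⟩
  | startWrite u q d =>
    obtain ⟨hg, hEq⟩ := ato_startWrite_inv ((hrg q).1 rfl)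
    have htru : Θ.tr u (s.th u) (RWAct.startWrite u q d) (s'.th u) := (hth u).1 ⟨rfl, trivial⟩
    have hub : ∀ r, ¬ Busy u r s := not_busy_of_tr hI htru (by simp) (by simp)
    have hkeep : ∀ r, r ≠ q → s'.rg r = s.rg r := fun r h =>
      (hrg r).2 (by simp only [RWAct.regOf, ne_eq, Option.some.injEq]; exact Ne.symm h)
    have hthk : ∀ t, t ≠ u → s'.th t = s.th t := fun t h =>
      (hth t).2 (fun hc => h (hc.1.symm))
    have hMW : MidW Θ u q s' := hG.2.2.2.1 u q d (s.th u) (s'.th u) htru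
    exact inv_startW hI hub hthk hMW (by rw [hEq]) (fun r h => by rw [hkeep r h])
      (fun r => by by_cases h : r = q
                   · subst h; rw [hEq]
                   · rw [hkeep r h])
  | orderWrite u q =>
    obtain ⟨h1, h2, hEq⟩ := ato_orderWrite_inv ((hrg q).1 rfl)
    have hkeep : ∀ r, r ≠ q → s'.rg r = s.rg r := fun r h =>
      (hrg r).2 (by simp only [RWAct.regOf, ne_eq, Option.some.injEq]; exact Ne.symm h)
    have hth' : ∀ t, s'.th t = s.th t := fun t => (hth t).2 (fun hc => hc.2.elim)
    refine inv_of_subset hI (fun t => Or.inr (hth' t)) (fun r => ?_)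
    by_cases h : r = q
    · subst h; rw [hEq]; exact ⟨subset_rfl, subset_rfl⟩
    · rw [hkeep r h]; exact ⟨subset_rfl, subset_rfl⟩
  | finishWrite u q =>
    obtain ⟨h1, h2, hEq⟩ := ato_finishWrite_inv ((hrg q).1 rfl)
    have hkeep : ∀ r, r ≠ q → s'.rg r = s.rg r := fun r h =>
      (hrg r).2 (by simp only [RWAct.regOf, ne_eq, Option.some.injEq]; exact Ne.symm h)
    have hthk : ∀ t, t ≠ u → s'.th t = s.th t := fun t h =>
      (hth t).2 (fun hc => h (hc.1.symm))
    obtain ⟨hd1, hd2, _⟩ := hI.2.2 u q h1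
    refine inv_of_subset hI (fun t => ?_) (fun r => ?_)
    · by_cases h : t = u
      · subst h
        left
        intro r hb
        by_cases hq : r = q
        · subst hq
          rcases hb with hb | hb
          · rw [hEq] at hb; exact hd1 hb
          · rw [hEq] at hb; exact hb.2 rfl
        · rw [busy_congr (hkeep r hq)] at hb; exact hd2 r hq hb
      · exact Or.inr (hthk t h)
    · by_cases h : r = q
      · subst h; rw [hEq]; exact ⟨subset_rfl, Set.diff_subset⟩
      · rw [hkeep r h]; exact ⟨subset_rfl, subset_rfl⟩
  | read u q d => exact (ato_read_inv ((hrg q).1 rfl)).elim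
  | crit u =>
    have hkeep : ∀ r, s'.rg r = s.rg r := fun r => (hrg r).2 (by simp [RWAct.regOf])
    have htru : Θ.tr u (s.th u) (RWAct.crit u) (s'.th u) := (hth u).1 ⟨rfl, trivial⟩
    have hub : ∀ r, ¬ Busy u r s := not_busy_of_tr hI htru (by simp) (by simp)
    refine inv_of_subset hI (fun t => ?_) (fun r => by rw [hkeep r]; exact ⟨subset_rfl, subset_rfl⟩)
    by_cases h : t = u
    · subst h; exact Or.inl (fun r hb => hub r ((busy_congr (hkeep r)).mp hb))
    · exact Or.inr ((hth t).2 (fun hc => h (hc.1.symm)))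
  | noncrit u =>
    have hkeep : ∀ r, s'.rg r = s.rg r := fun r => (hrg r).2 (by simp [RWAct.regOf])
    have htru : Θ.tr u (s.th u) (RWAct.noncrit u) (s'.th u) := (hth u).1 ⟨rfl, trivial⟩
    have hub : ∀ r, ¬ Busy u r s := not_busy_of_tr hI htru (by simp) (by simp)
    refine inv_of_subset hI (fun t => ?_) (fun r => by rw [hkeep r]; exact ⟨subset_rfl, subset_rfl⟩)
    by_cases h : t = u
    · subst h; exact Or.inl (fun r hb => hub r ((busy_congr (hkeep r)).mp hb))
    · exact Or.inr ((hth t).2 (fun hc => h (hc.1.symm)))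
  | tloc u n =>
    have hkeep : ∀ r, s'.rg r = s.rg r := fun r => (hrg r).2 (by simp [RWAct.regOf])
    have htru : Θ.tr u (s.th u) (RWAct.tloc u n) (s'.th u) := (hth u).1 ⟨rfl, trivial⟩
    have hub : ∀ r, ¬ Busy u r s := not_busy_of_tr hI htru (by simp) (by simp)
    refine inv_of_subset hI (fun t => ?_) (fun r => by rw [hkeep r]; exact ⟨subset_rfl, subset_rfl⟩)
    by_cases h : t = u
    · subst h; exact Or.inl (fun r hb => hub r ((busy_congr (hkeep r)).mp hb))
    · exact Or.inr ((hth t).2 (fun hc => h (hc.1.symm)))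

lemma mtrans_FR {mode : OverlapMode} {Θ : ThreadSys T R D} {s s' : MState Θ}
    {b : RWAct T R D} (hI : MInv Θ s) (hM : MTrans mode Θ s b s') :
    MTrans OverlapMode.FR Θ s b s' := by
  refine ⟨hM.1, fun r => ⟨fun hr => ?_, (hM.2 r).2⟩⟩
  have h := (hM.2 r).1 hr
  rcases ato_inv h with ⟨t, hb, hg, hEq⟩ | ⟨t, hb, hx, hy, hEq⟩ | ⟨t, hb, hx, hy, hEq⟩ |
    ⟨t, d, hb, hg, hEq⟩ | ⟨t, hb, hx, hy, hEq⟩ | ⟨t, hb, hx, hy, hEq⟩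
  · rw [hb, hEq]; exact AtoTrans.startRead _ t (gRead_FR hg)
  · rw [hb, hEq]; exact AtoTrans.orderRead _ t hx hy
  · rw [hb, hEq]; exact AtoTrans.finishRead _ t hx hy
  · rw [hb, hEq]
    refine AtoTrans.startWrite _ t d ⟨?_, gWrite_wrts hg⟩
    have htr : Θ.tr t (s.th t) b (s'.th t) := (hM.1 t).1 (by rw [hb]; exact ⟨rfl, trivial⟩)
    intro hmem
    obtain ⟨d', hd'⟩ := (hI.2.1 t r hmem).2.2.2 _ _ htr
    rw [hb] at hd'; simp at hd'
  · rw [hb, hEq]; exact AtoTrans.orderWrite _ t hx hy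
  · rw [hb, hEq]; exact AtoTrans.finishWrite _ t hx hy

lemma mtrans_any_of_FR {mode : OverlapMode} {Θ : ThreadSys T R D} {s s' : MState Θ}
    {b : RWAct T R D} (hM : MTrans OverlapMode.FR Θ s b s')
    (h1 : ∀ u q, b ≠ RWAct.startRead u q) (h2 : ∀ u q d, b ≠ RWAct.startWrite u q d) :
    MTrans mode Θ s b s' := by
  refine ⟨hM.1, fun r => ⟨fun hr => ?_, (hM.2 r).2⟩⟩
  have h := (hM.2 r).1 hr
  rcases ato_inv h with ⟨t, hb, hg, hEq⟩ | ⟨t, hb, hx, hy, hEq⟩ | ⟨t, hb, hx, hy, hEq⟩ |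
    ⟨t, d, hb, hg, hEq⟩ | ⟨t, hb, hx, hy, hEq⟩ | ⟨t, hb, hx, hy, hEq⟩
  · exact absurd hb (h1 t r)
  · rw [hb, hEq]; exact AtoTrans.orderRead _ t hx hy
  · rw [hb, hEq]; exact AtoTrans.finishRead _ t hx hy
  · exact absurd hb (h2 t r d)
  · rw [hb, hEq]; exact AtoTrans.orderWrite _ t hx hy
  · rw [hb, hEq]; exact AtoTrans.finishWrite _ t hx hy

lemma inv_path {mode : OverlapMode} {Θ : ThreadSys T R D} {d0 : ∀ r, D r}
    {π : RawPath (MState Θ) (RWAct T R D)} (hG : Θ.Good)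
    (hπ : IsPathOf (MTrans mode Θ) (Minit Θ d0) π) :
    ∀ i : ℕ, (i : ℕ∞) ≤ π.len → MInv Θ (π.states i) := by
  intro i
  induction i with
  | zero => intro _; rw [hπ.1]; exact inv_init Θ d0
  | succ i IH =>
    intro h
    have hi : (i : ℕ∞) < π.len := enat_lt_of_succ_le h
    exact inv_step hG (hπ.2 i hi) (IH hi.le)

end Aux3
section Aux4
set_option linter.unusedSectionVars false
set_option maxHeartbeats 1000000

variable {T R : Type} {D : R → Type} [DecidableEq T]

lemma th_step {mode : OverlapMode} {Θ : ThreadSys T R D} {s s' : MState Θ} {b : RWAct T R D}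
    (hM : MTrans mode Θ s b s') {t' : T} (hne : b.thr ≠ t') : s'.th t' = s.th t' :=
  (hM.1 t').2 (fun hc => hne hc.1)

lemma rg_step {mode : OverlapMode} {Θ : ThreadSys T R D} {s s' : MState Θ} {b : RWAct T R D}
    (hM : MTrans mode Θ s b s') (t' : T) (hne : b.thr ≠ t') (r : R) :
    (t' ∈ (s'.rg r).rds ↔ t' ∈ (s.rg r).rds) ∧
    (t' ∈ (s'.rg r).wrts ↔ t' ∈ (s.rg r).wrts) ∧
    (t' ∈ (s'.rg r).pend ↔ t' ∈ (s.rg r).pend) := by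
  classical
  obtain ⟨hth, hrg⟩ := hM
  by_cases hr : b.regOf = some r
  · rcases ato_inv ((hrg r).1 hr) with ⟨t, hb, -, hEq⟩ | ⟨t, hb, -, -, hEq⟩ |
      ⟨t, hb, -, -, hEq⟩ | ⟨t, d, hb, -, hEq⟩ | ⟨t, hb, -, -, hEq⟩ | ⟨t, hb, -, -, hEq⟩ <;>
    · have htt : t ≠ t' := by subst hb; exact hne
      rw [hEq]
      simp [Set.mem_insert_iff, Set.mem_diff, Ne.symm htt]
  · rw [(hrg r).2 hr]
    exact ⟨Iff.rfl, Iff.rfl, Iff.rfl⟩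

lemma wrts_step_subset {mode : OverlapMode} {Θ : ThreadSys T R D} {s s' : MState Θ}
    {b : RWAct T R D} (hM : MTrans mode Θ s b s') (r : R)
    (hnw : ∀ u d, b ≠ RWAct.startWrite u r d) : (s'.rg r).wrts ⊆ (s.rg r).wrts := by
  classical
  obtain ⟨hth, hrg⟩ := hM
  by_cases hr : b.regOf = some r
  · rcases ato_inv ((hrg r).1 hr) with ⟨t, hb, -, hEq⟩ | ⟨t, hb, -, -, hEq⟩ |
      ⟨t, hb, -, -, hEq⟩ | ⟨t, d, hb, -, hEq⟩ | ⟨t, hb, -, -, hEq⟩ | ⟨t, hb, -, -, hEq⟩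
    · rw [hEq]
    · rw [hEq]
    · rw [hEq]
    · exact absurd hb (hnw t d)
    · rw [hEq]
    · rw [hEq]; exact Set.diff_subset
  · rw [(hrg r).2 hr]

lemma rds_step_subset {mode : OverlapMode} {Θ : ThreadSys T R D} {s s' : MState Θ}
    {b : RWAct T R D} (hM : MTrans mode Θ s b s') (r : R)
    (hnr : ∀ u, b ≠ RWAct.startRead u r) : (s'.rg r).rds ⊆ (s.rg r).rds := by
  classical
  obtain ⟨hth, hrg⟩ := hM
  by_cases hr : b.regOf = some r
  · rcases ato_inv ((hrg r).1 hr) with ⟨t, hb, -, hEq⟩ | ⟨t, hb, -, -, hEq⟩ |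
      ⟨t, hb, -, -, hEq⟩ | ⟨t, d, hb, -, hEq⟩ | ⟨t, hb, -, -, hEq⟩ | ⟨t, hb, -, -, hEq⟩
    · exact absurd hb (hnr t)
    · rw [hEq]
    · rw [hEq]; exact Set.diff_subset
    · rw [hEq]
    · rw [hEq]
    · rw [hEq]
  · rw [(hrg r).2 hr]

/-- Construct an enabled thread-involving register action. -/
lemma enabled_mk {mode : OverlapMode} {Θ : ThreadSys T R D} (s : MState Θ) (b : RWAct T R D)
    (r : R) (hreg : b.regOf = some r) (hact : b.isThreadAct)
    (th' : Θ.TS b.thr) (hth : Θ.tr b.thr (s.th b.thr) b th')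
    (rg' : RegState T (D r)) (hA : AtoTrans mode r (s.rg r) b rg') :
    EnabledIn (MTrans mode Θ) b s := by
  classical
  refine ⟨⟨Function.update s.th b.thr th', Function.update s.rg r rg'⟩, ?_, ?_⟩
  · intro t
    constructor
    · rintro ⟨rfl, -⟩
      simpa using hth
    · intro h
      have hne : t ≠ b.thr := fun hc => h ⟨hc.symm, hact⟩
      simp [Function.update_of_ne hne]
  · intro q
    constructor
    · intro hq
      have hqr : q = r := by rw [hreg] at hq; exact (Option.some_injective _ hq).symm
      subst hqr
      simpa using hA
    · intro hq
      have hqr : q ≠ r := fun hc => hq (hc ▸ hreg)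
      simp [Function.update_of_ne hqr]

/-- Construct an enabled register-internal action. -/
lemma enabled_reg_only {mode : OverlapMode} {Θ : ThreadSys T R D} (s : MState Θ)
    (b : RWAct T R D) (r : R) (hreg : b.regOf = some r) (hact : ¬ b.isThreadAct)
    (rg' : RegState T (D r)) (hA : AtoTrans mode r (s.rg r) b rg') :
    EnabledIn (MTrans mode Θ) b s := by
  classical
  refine ⟨⟨s.th, Function.update s.rg r rg'⟩, ?_, ?_⟩
  · intro t
    exact ⟨fun h => absurd h.2 hact, fun _ => rfl⟩
  · intro q
    constructor
    · intro hq
      have hqr : q = r := by rw [hreg] at hq; exact (Option.some_injective _ hq).symm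
      subst hqr
      simpa using hA
    · intro hq
      have hqr : q ≠ r := fun hc => hq (hc ▸ hreg)
      simp [Function.update_of_ne hqr]

lemma exists_thr_act {mode : OverlapMode} {Θ : ThreadSys T R D}
    {π : RawPath (MState Θ) (RWAct T R D)}
    (hj : JustPath (MTrans mode Θ) (concOf mode) Blk π) {m : ℕ} (hm : (m : ℕ∞) ≤ π.len)
    {b : RWAct T R D} (hB : b ∉ Blk) (hns : ∀ q, ¬ b.inStart q)
    (hen : EnabledIn (MTrans mode Θ) b (π.states m)) :
    ∃ j, m ≤ j ∧ (j : ℕ∞) < π.len ∧ (π.acts j).thr = b.thr := by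
  obtain ⟨j, h1, h2, h3⟩ := hj m b hm hB hen
  refine ⟨j, h1, h2, ?_⟩
  by_contra hc
  exact h3 (concOf_of_thr hns (fun hc' => hc hc'.symm) mode)

/-- State components of a non-acting thread are preserved. -/
lemma until_first {mode : OverlapMode} {Θ : ThreadSys T R D}
    {π : RawPath (MState Θ) (RWAct T R D)}
    (hstep : ∀ i : ℕ, (i : ℕ∞) < π.len → MTrans mode Θ (π.states i) (π.acts i) (π.states (i + 1)))
    (t' : T) (r : R) (m : ℕ) :
    ∀ j₀, m ≤ j₀ → (j₀ : ℕ∞) ≤ π.len → (∀ i, m ≤ i → i < j₀ → (π.acts i).thr ≠ t') →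
    ((t' ∈ ((π.states j₀).rg r).rds ↔ t' ∈ ((π.states m).rg r).rds) ∧
     (t' ∈ ((π.states j₀).rg r).wrts ↔ t' ∈ ((π.states m).rg r).wrts) ∧
     (t' ∈ ((π.states j₀).rg r).pend ↔ t' ∈ ((π.states m).rg r).pend)) ∧
    (π.states j₀).th t' = (π.states m).th t' := by
  intro j₀ hmj
  induction j₀, hmj using Nat.le_induction with
  | base => exact fun _ _ => ⟨⟨Iff.rfl, Iff.rfl, Iff.rfl⟩, rfl⟩
  | succ j hmj IH =>
    intro hj0 hmin
    have hjlt : (j : ℕ∞) < π.len := enat_lt_of_succ_le hj0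
    have hM := hstep j hjlt
    have hne : (π.acts j).thr ≠ t' := hmin j hmj (Nat.lt_succ_self j)
    obtain ⟨IH1, IH2⟩ := IH hjlt.le (fun i h1 h2 => hmin i h1 (h2.trans (Nat.lt_succ_self j)))
    obtain ⟨g1, g2, g3⟩ := rg_step hM t' hne r
    exact ⟨⟨g1.trans IH1.1, g2.trans IH1.2.1, g3.trans IH1.2.2⟩, (th_step hM hne).trans IH2⟩

lemma act_of_busyW {mode : OverlapMode} {Θ : ThreadSys T R D} {s s' : MState Θ}
    {b : RWAct T R D} (hI : MInv Θ s) (hM : MTrans mode Θ s b s') {t' : T} {r : R}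
    (hw : t' ∈ (s.rg r).wrts) (hthr : b.thr = t') :
    b = RWAct.orderWrite t' r ∨ b = RWAct.finishWrite t' r := by
  obtain ⟨hd1, hd2, hd3⟩ := hI.2.2 t' r hw
  obtain ⟨hth, hrg⟩ := hM
  cases b with
  | startRead u q =>
    have hu : u = t' := hthr
    subst hu
    have := hd3.2 _ _ ((hth u).1 ⟨rfl, trivial⟩)
    simp at this
  | orderRead u q =>
    have hu : u = t' := hthr
    subst hu
    obtain ⟨hm, -, -⟩ := ato_orderRead_inv ((hrg q).1 rfl)
    by_cases hq : q = r
    · subst hq; exact absurd hm hd1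
    · exact absurd (Or.inl hm) (hd2 q hq)
  | finishRead u q d =>
    have hu : u = t' := hthr
    subst hu
    have := hd3.2 _ _ ((hth u).1 ⟨rfl, trivial⟩)
    simp at this
  | startWrite u q d =>
    have hu : u = t' := hthr
    subst hu
    have := hd3.2 _ _ ((hth u).1 ⟨rfl, trivial⟩)
    simp at this
  | orderWrite u q =>
    have hu : u = t' := hthr
    subst hu
    obtain ⟨hm, -, -⟩ := ato_orderWrite_inv ((hrg q).1 rfl)
    by_cases hq : q = r
    · subst hq; exact Or.inl rfl
    · exact absurd (Or.inr hm) (hd2 q hq)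
  | finishWrite u q =>
    have hu : u = t' := hthr
    subst hu
    have heq := hd3.2 _ _ ((hth u).1 ⟨rfl, trivial⟩)
    injection heq with h1 h2
    subst h2
    exact Or.inr rfl
  | read u q d => exact (ato_read_inv ((hrg q).1 rfl)).elim
  | crit u =>
    have hu : u = t' := hthr
    subst hu
    have := hd3.2 _ _ ((hth u).1 ⟨rfl, trivial⟩)
    simp at this
  | noncrit u =>
    have hu : u = t' := hthr
    subst hu
    have := hd3.2 _ _ ((hth u).1 ⟨rfl, trivial⟩)
    simp at this
  | tloc u n =>
    have hu : u = t' := hthr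
    subst hu
    have := hd3.2 _ _ ((hth u).1 ⟨rfl, trivial⟩)
    simp at this

lemma act_of_busyR {mode : OverlapMode} {Θ : ThreadSys T R D} {s s' : MState Θ}
    {b : RWAct T R D} (hI : MInv Θ s) (hM : MTrans mode Θ s b s') {t' : T} {r : R}
    (hw : t' ∈ (s.rg r).rds) (hthr : b.thr = t') :
    b = RWAct.orderRead t' r ∨ ∃ d, b = RWAct.finishRead t' r d := by
  obtain ⟨hd1, hd2, hd3⟩ := hI.2.1 t' r hw
  obtain ⟨hth, hrg⟩ := hM
  cases b with
  | startRead u q =>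
    have hu : u = t' := hthr
    subst hu
    obtain ⟨d, hd⟩ := hd3.2 _ _ ((hth u).1 ⟨rfl, trivial⟩)
    simp at hd
  | orderRead u q =>
    have hu : u = t' := hthr
    subst hu
    obtain ⟨hm, -, -⟩ := ato_orderRead_inv ((hrg q).1 rfl)
    by_cases hq : q = r
    · subst hq; exact Or.inl rfl
    · exact absurd (Or.inl hm) (hd2 q hq)
  | finishRead u q d =>
    have hu : u = t' := hthr
    subst hu
    obtain ⟨d', hd'⟩ := hd3.2 _ _ ((hth u).1 ⟨rfl, trivial⟩)
    have hq : q = r := by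
      injection hd'
    subst hq
    exact Or.inr ⟨d, rfl⟩
  | startWrite u q d =>
    have hu : u = t' := hthr
    subst hu
    obtain ⟨d', hd'⟩ := hd3.2 _ _ ((hth u).1 ⟨rfl, trivial⟩)
    simp at hd'
  | orderWrite u q =>
    have hu : u = t' := hthr
    subst hu
    obtain ⟨hm, -, -⟩ := ato_orderWrite_inv ((hrg q).1 rfl)
    by_cases hq : q = r
    · subst hq; exact absurd hm hd1
    · exact absurd (Or.inr hm) (hd2 q hq)
  | finishWrite u q =>
    have hu : u = t' := hthr
    subst hu
    obtain ⟨d', hd'⟩ := hd3.2 _ _ ((hth u).1 ⟨rfl, trivial⟩)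
    simp at hd'
  | read u q d => exact (ato_read_inv ((hrg q).1 rfl)).elim
  | crit u =>
    have hu : u = t' := hthr
    subst hu
    obtain ⟨d', hd'⟩ := hd3.2 _ _ ((hth u).1 ⟨rfl, trivial⟩)
    simp at hd'
  | noncrit u =>
    have hu : u = t' := hthr
    subst hu
    obtain ⟨d', hd'⟩ := hd3.2 _ _ ((hth u).1 ⟨rfl, trivial⟩)
    simp at hd'
  | tloc u n =>
    have hu : u = t' := hthr
    subst hu
    obtain ⟨d', hd'⟩ := hd3.2 _ _ ((hth u).1 ⟨rfl, trivial⟩)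
    simp at hd'

end Aux4
section Aux5
set_option linter.unusedSectionVars false
set_option maxHeartbeats 1000000

variable {T R : Type} {D : R → Type} [DecidableEq T]
variable {mode : OverlapMode} {Θ : ThreadSys T R D} {π : RawPath (MState Θ) (RWAct T R D)}

lemma wrts_mono_range
    (hstep : ∀ i : ℕ, (i : ℕ∞) < π.len → MTrans mode Θ (π.states i) (π.acts i) (π.states (i + 1)))
    (r : R) {k : ℕ}
    (NW : ∀ j, k ≤ j → (j : ℕ∞) < π.len → ∀ u d, π.acts j ≠ RWAct.startWrite u r d)
    (m : ℕ) (hkm : k ≤ m) :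
    ∀ j, m ≤ j → (j : ℕ∞) ≤ π.len → ((π.states j).rg r).wrts ⊆ ((π.states m).rg r).wrts := by
  intro j hmj
  induction j, hmj using Nat.le_induction with
  | base => exact fun _ => subset_rfl
  | succ j hmj IH =>
    intro hj1
    have hjlt : (j : ℕ∞) < π.len := enat_lt_of_succ_le hj1
    exact (wrts_step_subset (hstep j hjlt) r (NW j (hkm.trans hmj) hjlt)).trans (IH hjlt.le)

lemma rds_mono_range
    (hstep : ∀ i : ℕ, (i : ℕ∞) < π.len → MTrans mode Θ (π.states i) (π.acts i) (π.states (i + 1)))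
    (r : R) {k : ℕ}
    (NR : ∀ j, k ≤ j → (j : ℕ∞) < π.len → ∀ u, π.acts j ≠ RWAct.startRead u r)
    (m : ℕ) (hkm : k ≤ m) :
    ∀ j, m ≤ j → (j : ℕ∞) ≤ π.len → ((π.states j).rg r).rds ⊆ ((π.states m).rg r).rds := by
  intro j hmj
  induction j, hmj using Nat.le_induction with
  | base => exact fun _ => subset_rfl
  | succ j hmj IH =>
    intro hj1
    have hjlt : (j : ℕ∞) < π.len := enat_lt_of_succ_le hj1
    exact (rds_step_subset (hstep j hjlt) r (NR j (hkm.trans hmj) hjlt)).trans (IH hjlt.le)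

lemma wrts_remove_one
    (hstep : ∀ i : ℕ, (i : ℕ∞) < π.len → MTrans mode Θ (π.states i) (π.acts i) (π.states (i + 1)))
    (hj : JustPath (MTrans mode Θ) (concOf mode) Blk π)
    (hInv : ∀ i : ℕ, (i : ℕ∞) ≤ π.len → MInv Θ (π.states i))
    (r : R) (t' : T) :
    ∀ m : ℕ, (m : ℕ∞) ≤ π.len → t' ∈ ((π.states m).rg r).wrts →
    ∃ m', m ≤ m' ∧ (m' : ℕ∞) ≤ π.len ∧ t' ∉ ((π.states m').rg r).wrts := by
  classical
  have aux : ∀ m : ℕ, (m : ℕ∞) ≤ π.len → t' ∈ ((π.states m).rg r).wrts →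
      t' ∉ ((π.states m).rg r).pend →
      ∃ m', m ≤ m' ∧ (m' : ℕ∞) ≤ π.len ∧ t' ∉ ((π.states m').rg r).wrts := by
    intro m hm hw hp
    have hmidW : MidW Θ t' r (π.states m) := ((hInv m hm).2.2 t' r hw).2.2
    obtain ⟨th', hth'⟩ := hmidW.1
    have hen : EnabledIn (MTrans mode Θ) (RWAct.finishWrite t' r) (π.states m) :=
      enabled_mk _ _ r rfl trivial th' hth' _ (AtoTrans.finishWrite _ t' hw hp)
    have hex : ∃ i, m ≤ i ∧ (i : ℕ∞) < π.len ∧ (π.acts i).thr = t' :=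
      exists_thr_act hj hm (by simp [Blk]) (by intro q; simp [RWAct.inStart,
        RWAct.isReadStart, RWAct.isWriteStart]) hen
    set j₀ := Nat.find hex with hj₀def
    obtain ⟨hj01, hj02, hj03⟩ := Nat.find_spec hex
    have hmin : ∀ i, m ≤ i → i < j₀ → (π.acts i).thr ≠ t' := by
      intro i h1 h2 hc
      exact Nat.find_min hex h2 ⟨h1, enat_lt_of_lt_le h2 hj02.le, hc⟩
    obtain ⟨⟨g1, g2, g3⟩, gth⟩ := until_first hstep t' r m j₀ hj01 hj02.le hmin
    have hw0 : t' ∈ ((π.states j₀).rg r).wrts := g2.mpr hw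
    have hp0 : t' ∉ ((π.states j₀).rg r).pend := fun h => hp (g3.mp h)
    rcases act_of_busyW (hInv j₀ hj02.le) (hstep j₀ hj02) hw0 hj03 with hact | hact
    · have hreg := ((hstep j₀ hj02).2 r).1 (by rw [hact]; rfl)
      rw [hact] at hreg
      obtain ⟨-, hpend, -⟩ := ato_orderWrite_inv hreg
      exact absurd hpend hp0
    · have hreg := ((hstep j₀ hj02).2 r).1 (by rw [hact]; rfl)
      rw [hact] at hreg
      obtain ⟨-, -, hEq⟩ := ato_finishWrite_inv hreg
      refine ⟨j₀ + 1, hj01.trans (Nat.le_succ _), enat_succ_le hj02, ?_⟩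
      rw [hEq]
      simp
  intro m hm hw
  by_cases hp : t' ∈ ((π.states m).rg r).pend
  · have hen : EnabledIn (MTrans mode Θ) (RWAct.orderWrite t' r) (π.states m) :=
      enabled_reg_only _ _ r rfl (fun h => h) _ (AtoTrans.orderWrite _ t' hw hp)
    have hex : ∃ i, m ≤ i ∧ (i : ℕ∞) < π.len ∧ (π.acts i).thr = t' :=
      exists_thr_act hj hm (by simp [Blk]) (by intro q; simp [RWAct.inStart,
        RWAct.isReadStart, RWAct.isWriteStart]) hen
    set j₀ := Nat.find hex with hj₀def
    obtain ⟨hj01, hj02, hj03⟩ := Nat.find_spec hex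
    have hmin : ∀ i, m ≤ i → i < j₀ → (π.acts i).thr ≠ t' := by
      intro i h1 h2 hc
      exact Nat.find_min hex h2 ⟨h1, enat_lt_of_lt_le h2 hj02.le, hc⟩
    obtain ⟨⟨g1, g2, g3⟩, gth⟩ := until_first hstep t' r m j₀ hj01 hj02.le hmin
    have hw0 : t' ∈ ((π.states j₀).rg r).wrts := g2.mpr hw
    rcases act_of_busyW (hInv j₀ hj02.le) (hstep j₀ hj02) hw0 hj03 with hact | hact
    · have hreg := ((hstep j₀ hj02).2 r).1 (by rw [hact]; rfl)
      rw [hact] at hreg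
      obtain ⟨-, -, hEq⟩ := ato_orderWrite_inv hreg
      have hw1 : t' ∈ ((π.states (j₀ + 1)).rg r).wrts := by rw [hEq]; exact hw0
      have hp1 : t' ∉ ((π.states (j₀ + 1)).rg r).pend := by rw [hEq]; simp
      obtain ⟨m', h1, h2, h3⟩ := aux (j₀ + 1) (enat_succ_le hj02) hw1 hp1
      exact ⟨m', hj01.trans ((Nat.le_succ _).trans h1), h2, h3⟩
    · have hreg := ((hstep j₀ hj02).2 r).1 (by rw [hact]; rfl)
      rw [hact] at hreg
      obtain ⟨-, -, hEq⟩ := ato_finishWrite_inv hreg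
      refine ⟨j₀ + 1, hj01.trans (Nat.le_succ _), enat_succ_le hj02, ?_⟩
      rw [hEq]
      simp
  · exact aux m hm hw hp

lemma rds_remove_one
    (hstep : ∀ i : ℕ, (i : ℕ∞) < π.len → MTrans mode Θ (π.states i) (π.acts i) (π.states (i + 1)))
    (hj : JustPath (MTrans mode Θ) (concOf mode) Blk π)
    (hInv : ∀ i : ℕ, (i : ℕ∞) ≤ π.len → MInv Θ (π.states i))
    (r : R) (t' : T) :
    ∀ m : ℕ, (m : ℕ∞) ≤ π.len → t' ∈ ((π.states m).rg r).rds →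
    ∃ m', m ≤ m' ∧ (m' : ℕ∞) ≤ π.len ∧ t' ∉ ((π.states m').rg r).rds := by
  classical
  have aux : ∀ m : ℕ, (m : ℕ∞) ≤ π.len → t' ∈ ((π.states m).rg r).rds →
      t' ∉ ((π.states m).rg r).pend →
      ∃ m', m ≤ m' ∧ (m' : ℕ∞) ≤ π.len ∧ t' ∉ ((π.states m').rg r).rds := by
    intro m hm hw hp
    have hmidR : MidR Θ t' r (π.states m) := ((hInv m hm).2.1 t' r hw).2.2
    obtain ⟨th', hth'⟩ := hmidR.1 (((π.states m).rg r).recv t')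
    have hen : EnabledIn (MTrans mode Θ)
        (RWAct.finishRead t' r (((π.states m).rg r).recv t')) (π.states m) :=
      enabled_mk _ _ r rfl trivial th' hth' _ (AtoTrans.finishRead _ t' hw hp)
    have hex : ∃ i, m ≤ i ∧ (i : ℕ∞) < π.len ∧ (π.acts i).thr = t' :=
      exists_thr_act hj hm (by simp [Blk]) (by intro q; simp [RWAct.inStart,
        RWAct.isReadStart, RWAct.isWriteStart]) hen
    set j₀ := Nat.find hex with hj₀def
    obtain ⟨hj01, hj02, hj03⟩ := Nat.find_spec hex
    have hmin : ∀ i, m ≤ i → i < j₀ → (π.acts i).thr ≠ t' := by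
      intro i h1 h2 hc
      exact Nat.find_min hex h2 ⟨h1, enat_lt_of_lt_le h2 hj02.le, hc⟩
    obtain ⟨⟨g1, g2, g3⟩, gth⟩ := until_first hstep t' r m j₀ hj01 hj02.le hmin
    have hw0 : t' ∈ ((π.states j₀).rg r).rds := g1.mpr hw
    have hp0 : t' ∉ ((π.states j₀).rg r).pend := fun h => hp (g3.mp h)
    rcases act_of_busyR (hInv j₀ hj02.le) (hstep j₀ hj02) hw0 hj03 with hact | ⟨d, hact⟩
    · have hreg := ((hstep j₀ hj02).2 r).1 (by rw [hact]; rfl)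
      rw [hact] at hreg
      obtain ⟨-, hpend, -⟩ := ato_orderRead_inv hreg
      exact absurd hpend hp0
    · have hreg := ((hstep j₀ hj02).2 r).1 (by rw [hact]; rfl)
      rw [hact] at hreg
      obtain ⟨-, -, hEq⟩ := ato_finishRead_inv hreg
      refine ⟨j₀ + 1, hj01.trans (Nat.le_succ _), enat_succ_le hj02, ?_⟩
      rw [hEq]
      simp
  intro m hm hw
  by_cases hp : t' ∈ ((π.states m).rg r).pend
  · have hen : EnabledIn (MTrans mode Θ) (RWAct.orderRead t' r) (π.states m) :=
      enabled_reg_only _ _ r rfl (fun h => h) _ (AtoTrans.orderRead _ t' hw hp)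
    have hex : ∃ i, m ≤ i ∧ (i : ℕ∞) < π.len ∧ (π.acts i).thr = t' :=
      exists_thr_act hj hm (by simp [Blk]) (by intro q; simp [RWAct.inStart,
        RWAct.isReadStart, RWAct.isWriteStart]) hen
    set j₀ := Nat.find hex with hj₀def
    obtain ⟨hj01, hj02, hj03⟩ := Nat.find_spec hex
    have hmin : ∀ i, m ≤ i → i < j₀ → (π.acts i).thr ≠ t' := by
      intro i h1 h2 hc
      exact Nat.find_min hex h2 ⟨h1, enat_lt_of_lt_le h2 hj02.le, hc⟩
    obtain ⟨⟨g1, g2, g3⟩, gth⟩ := until_first hstep t' r m j₀ hj01 hj02.le hmin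
    have hw0 : t' ∈ ((π.states j₀).rg r).rds := g1.mpr hw
    rcases act_of_busyR (hInv j₀ hj02.le) (hstep j₀ hj02) hw0 hj03 with hact | ⟨d, hact⟩
    · have hreg := ((hstep j₀ hj02).2 r).1 (by rw [hact]; rfl)
      rw [hact] at hreg
      obtain ⟨-, -, hEq⟩ := ato_orderRead_inv hreg
      have hw1 : t' ∈ ((π.states (j₀ + 1)).rg r).rds := by rw [hEq]; exact hw0
      have hp1 : t' ∉ ((π.states (j₀ + 1)).rg r).pend := by rw [hEq]; simp
      obtain ⟨m', h1, h2, h3⟩ := aux (j₀ + 1) (enat_succ_le hj02) hw1 hp1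
      exact ⟨m', hj01.trans ((Nat.le_succ _).trans h1), h2, h3⟩
    · have hreg := ((hstep j₀ hj02).2 r).1 (by rw [hact]; rfl)
      rw [hact] at hreg
      obtain ⟨-, -, hEq⟩ := ato_finishRead_inv hreg
      refine ⟨j₀ + 1, hj01.trans (Nat.le_succ _), enat_succ_le hj02, ?_⟩
      rw [hEq]
      simp
  · exact aux m hm hw hp

lemma wrts_empty
    (hstep : ∀ i : ℕ, (i : ℕ∞) < π.len → MTrans mode Θ (π.states i) (π.acts i) (π.states (i + 1)))
    (hj : JustPath (MTrans mode Θ) (concOf mode) Blk π)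
    (hInv : ∀ i : ℕ, (i : ℕ∞) ≤ π.len → MInv Θ (π.states i))
    (r : R) (k : ℕ)
    (NW : ∀ j, k ≤ j → (j : ℕ∞) < π.len → ∀ u d, π.acts j ≠ RWAct.startWrite u r d) :
    ∀ n m, k ≤ m → (m : ℕ∞) ≤ π.len → (((π.states m).rg r).wrts).ncard ≤ n →
    ∃ m', m ≤ m' ∧ (m' : ℕ∞) ≤ π.len ∧ ((π.states m').rg r).wrts = ∅ := by
  intro n
  induction n with
  | zero =>
    intro m h1 h2 h3
    have hfin : (((π.states m).rg r).wrts).Finite :=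
      ((hInv m h2).1 r).subset Set.subset_union_right
    exact ⟨m, le_rfl, h2, (Set.ncard_eq_zero hfin).mp (Nat.le_zero.mp h3)⟩
  | succ n IH =>
    intro m h1 h2 h3
    have hfin : (((π.states m).rg r).wrts).Finite :=
      ((hInv m h2).1 r).subset Set.subset_union_right
    by_cases he : ((π.states m).rg r).wrts = ∅
    · exact ⟨m, le_rfl, h2, he⟩
    · obtain ⟨t', ht'⟩ := Set.nonempty_iff_ne_empty.mpr he
      obtain ⟨m₁, hm1, hm2, hm3⟩ := wrts_remove_one hstep hj hInv r t' m h2 ht'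
      have hsub : ((π.states m₁).rg r).wrts ⊆ ((π.states m).rg r).wrts \ {t'} := by
        intro x hx
        refine ⟨wrts_mono_range hstep r NW m h1 m₁ hm1 hm2 hx, ?_⟩
        intro hx2
        rw [Set.mem_singleton_iff] at hx2
        subst hx2
        exact hm3 hx
      have hc2 : (((π.states m₁).rg r).wrts).ncard ≤ n := by
        have hle := Set.ncard_le_ncard hsub hfin.diff
        rw [Set.ncard_diff_singleton_of_mem ht'] at hle
        omega
      obtain ⟨m', h1', h2', h3'⟩ := IH m₁ (h1.trans hm1) hm2 hc2
      exact ⟨m', hm1.trans h1', h2', h3'⟩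

lemma rds_empty
    (hstep : ∀ i : ℕ, (i : ℕ∞) < π.len → MTrans mode Θ (π.states i) (π.acts i) (π.states (i + 1)))
    (hj : JustPath (MTrans mode Θ) (concOf mode) Blk π)
    (hInv : ∀ i : ℕ, (i : ℕ∞) ≤ π.len → MInv Θ (π.states i))
    (r : R) (k : ℕ)
    (NR : ∀ j, k ≤ j → (j : ℕ∞) < π.len → ∀ u, π.acts j ≠ RWAct.startRead u r) :
    ∀ n m, k ≤ m → (m : ℕ∞) ≤ π.len → (((π.states m).rg r).rds).ncard ≤ n →
    ∃ m', m ≤ m' ∧ (m' : ℕ∞) ≤ π.len ∧ ((π.states m').rg r).rds = ∅ := by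
  intro n
  induction n with
  | zero =>
    intro m h1 h2 h3
    have hfin : (((π.states m).rg r).rds).Finite :=
      ((hInv m h2).1 r).subset Set.subset_union_left
    exact ⟨m, le_rfl, h2, (Set.ncard_eq_zero hfin).mp (Nat.le_zero.mp h3)⟩
  | succ n IH =>
    intro m h1 h2 h3
    have hfin : (((π.states m).rg r).rds).Finite :=
      ((hInv m h2).1 r).subset Set.subset_union_left
    by_cases he : ((π.states m).rg r).rds = ∅
    · exact ⟨m, le_rfl, h2, he⟩
    · obtain ⟨t', ht'⟩ := Set.nonempty_iff_ne_empty.mpr he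
      obtain ⟨m₁, hm1, hm2, hm3⟩ := rds_remove_one hstep hj hInv r t' m h2 ht'
      have hsub : ((π.states m₁).rg r).rds ⊆ ((π.states m).rg r).rds \ {t'} := by
        intro x hx
        refine ⟨rds_mono_range hstep r NR m h1 m₁ hm1 hm2 hx, ?_⟩
        intro hx2
        rw [Set.mem_singleton_iff] at hx2
        subst hx2
        exact hm3 hx
      have hc2 : (((π.states m₁).rg r).rds).ncard ≤ n := by
        have hle := Set.ncard_le_ncard hsub hfin.diff
        rw [Set.ncard_diff_singleton_of_mem ht'] at hle
        omega
      obtain ⟨m', h1', h2', h3'⟩ := IH m₁ (h1.trans hm1) hm2 hc2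
      exact ⟨m', hm1.trans h1', h2', h3'⟩

end Aux5

/-- Any `C`-complete (i.e. `B`-`⌣_C`-just) path of the overlap-restricted model `M_C`
(`C ∈ {A, I, S}`) starting in its initial state is also a `C`-complete path of the
unrestricted full-read atomic model `M_FR` starting in its initial state. -/
theorem restricted_just_path_is_full_just_path
    {T R : Type} {D : R → Type} [DecidableEq T]
    (Θ : ThreadSys T R D) (hΘ : Θ.Good) (d0 : ∀ r, D r)
    (mode : OverlapMode)
    (hmode : mode = OverlapMode.A ∨ mode = OverlapMode.I ∨ mode = OverlapMode.S)
    (π : RawPath (MState Θ) (RWAct T R D))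
    (hπ : IsPathOf (MTrans mode Θ) (Minit Θ d0) π)
    (hj : JustPath (MTrans mode Θ) (concOf mode) Blk π) :
    IsPathOf (MTrans OverlapMode.FR Θ) (Minit Θ d0) π ∧
      JustPath (MTrans OverlapMode.FR Θ) (concOf mode) Blk π := by
  classical
  have hInvP : ∀ i : ℕ, (i : ℕ∞) ≤ π.len → MInv Θ (π.states i) := inv_path hΘ hπ
  have hstep := hπ.2
  refine ⟨⟨hπ.1, fun i hi => mtrans_FR (hInvP i hi.le) (hstep i hi)⟩, ?_⟩
  intro k a hk ha hen
  by_contra hcon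
  push_neg at hcon
  obtain ⟨sw, hsw⟩ := hen
  have hthrne : ∀ j, k ≤ j → (j : ℕ∞) < π.len → (π.acts j).thr ≠ a.thr :=
    fun j h1 h2 hc => thr_ne_of_concOf (hcon j h1 h2) hc.symm
  have hcontra : ∀ m : ℕ, k ≤ m → (m : ℕ∞) ≤ π.len →
      EnabledIn (MTrans mode Θ) a (π.states m) → False := by
    intro m h1 h2 he
    obtain ⟨j, hj1, hj2, hj3⟩ := hj m a h2 ha he
    exact hj3 (hcon j (h1.trans hj1) hj2)
  have hmFR : mode ≠ OverlapMode.FR := by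
    rcases hmode with rfl | rfl | rfl <;> simp
  cases a with
  | startRead u q =>
    have htru : Θ.tr u ((π.states k).th u) (RWAct.startRead u q) (sw.th u) :=
      (hsw.1 u).1 ⟨rfl, trivial⟩
    obtain ⟨hgF, -⟩ := ato_startRead_inv ((hsw.2 q).1 rfl)
    have hNW : ∀ j, k ≤ j → (j : ℕ∞) < π.len → ∀ u' d', π.acts j ≠ RWAct.startWrite u' q d' := by
      intro j h1 h2 u' d' hc
      have h3 := no_ws_of_concOf hmFR (q := q) (a := RWAct.startRead u q) (Or.inl rfl) (hcon j h1 h2)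
      rw [hc] at h3
      exact h3 rfl
    have finish : ∀ m : ℕ, k ≤ m → (m : ℕ∞) ≤ π.len →
        gRead mode ((π.states m).rg q) u → False := by
      intro m h1 h2 hg
      have hmin : ∀ i, k ≤ i → i < m → (π.acts i).thr ≠ u :=
        fun i hi1 hi2 => hthrne i hi1 (enat_lt_of_lt_le hi2 h2)
      have hth_eq := (until_first hstep u q k m h1 h2 hmin).2
      exact hcontra m h1 h2
        (enabled_mk _ _ q rfl trivial (sw.th u)
          (by show Θ.tr u ((π.states m).th u) (RWAct.startRead u q) (sw.th u)
              rw [hth_eq]; exact htru) _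
          (AtoTrans.startRead _ u hg))
    rcases hmode with rfl | rfl | rfl
    · have hNR : ∀ j, k ≤ j → (j : ℕ∞) < π.len → ∀ u', π.acts j ≠ RWAct.startRead u' q := by
        intro j h1 h2 u' hc
        have h3 := no_rs_of_concA (q := q) (a := RWAct.startRead u q) rfl (hcon j h1 h2)
        rw [hc] at h3
        exact h3 rfl
      obtain ⟨m₁, h11, h12, h13⟩ := wrts_empty hstep hj hInvP q k hNW
        (((π.states k).rg q).wrts).ncard k le_rfl hk le_rfl
      obtain ⟨m₂, h21, h22, h23⟩ := rds_empty hstep hj hInvP q k hNR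
        (((π.states m₁).rg q).rds).ncard m₁ h11 h12 le_rfl
      have hw2 : ((π.states m₂).rg q).wrts = ∅ := by
        have hsub := wrts_mono_range hstep q hNW m₁ h11 m₂ h21 h22
        rw [h13] at hsub
        exact Set.subset_empty_iff.mp hsub
      exact finish m₂ (h11.trans h21) h22 ⟨h23, hw2⟩
    · obtain ⟨m₁, h11, h12, h13⟩ := wrts_empty hstep hj hInvP q k hNW
        (((π.states k).rg q).wrts).ncard k le_rfl hk le_rfl
      have hmin : ∀ i, k ≤ i → i < m₁ → (π.acts i).thr ≠ u :=
        fun i hi1 hi2 => hthrne i hi1 (enat_lt_of_lt_le hi2 h12)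
      have hiff := ((until_first hstep u q k m₁ h11 h12 hmin).1).1
      exact finish m₁ h11 h12 ⟨fun hc => (gRead_FR hgF).1 (hiff.mp hc), h13⟩
    · obtain ⟨m₁, h11, h12, h13⟩ := wrts_empty hstep hj hInvP q k hNW
        (((π.states k).rg q).wrts).ncard k le_rfl hk le_rfl
      have hmin : ∀ i, k ≤ i → i < m₁ → (π.acts i).thr ≠ u :=
        fun i hi1 hi2 => hthrne i hi1 (enat_lt_of_lt_le hi2 h12)
      have hiff := ((until_first hstep u q k m₁ h11 h12 hmin).1).1
      exact finish m₁ h11 h12 ⟨fun hc => (gRead_FR hgF).1 (hiff.mp hc), h13⟩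
  | startWrite u q d =>
    have htru : Θ.tr u ((π.states k).th u) (RWAct.startWrite u q d) (sw.th u) :=
      (hsw.1 u).1 ⟨rfl, trivial⟩
    have hNW : ∀ j, k ≤ j → (j : ℕ∞) < π.len → ∀ u' d', π.acts j ≠ RWAct.startWrite u' q d' := by
      intro j h1 h2 u' d' hc
      have h3 := no_ws_of_concOf hmFR (q := q) (a := RWAct.startWrite u q d) (Or.inr rfl) (hcon j h1 h2)
      rw [hc] at h3
      exact h3 rfl
    have finish : ∀ m : ℕ, k ≤ m → (m : ℕ∞) ≤ π.len →
        gWrite mode ((π.states m).rg q) u → False := by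
      intro m h1 h2 hg
      have hmin : ∀ i, k ≤ i → i < m → (π.acts i).thr ≠ u :=
        fun i hi1 hi2 => hthrne i hi1 (enat_lt_of_lt_le hi2 h2)
      have hth_eq := (until_first hstep u q k m h1 h2 hmin).2
      exact hcontra m h1 h2
        (enabled_mk _ _ q rfl trivial (sw.th u)
          (by show Θ.tr u ((π.states m).th u) (RWAct.startWrite u q d) (sw.th u)
              rw [hth_eq]; exact htru) _
          (AtoTrans.startWrite _ u d hg))
    rcases hmode with rfl | rfl | rfl
    · have hNR : ∀ j, k ≤ j → (j : ℕ∞) < π.len → ∀ u', π.acts j ≠ RWAct.startRead u' q := by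
        intro j h1 h2 u' hc
        have h3 := no_rs_of_concA_w (q := q) (a := RWAct.startWrite u q d) rfl (hcon j h1 h2)
        rw [hc] at h3
        exact h3 rfl
      obtain ⟨m₁, h11, h12, h13⟩ := wrts_empty hstep hj hInvP q k hNW
        (((π.states k).rg q).wrts).ncard k le_rfl hk le_rfl
      obtain ⟨m₂, h21, h22, h23⟩ := rds_empty hstep hj hInvP q k hNR
        (((π.states m₁).rg q).rds).ncard m₁ h11 h12 le_rfl
      have hw2 : ((π.states m₂).rg q).wrts = ∅ := by
        have hsub := wrts_mono_range hstep q hNW m₁ h11 m₂ h21 h22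
        rw [h13] at hsub
        exact Set.subset_empty_iff.mp hsub
      exact finish m₂ (h11.trans h21) h22 ⟨h23, hw2⟩
    · have hNR : ∀ j, k ≤ j → (j : ℕ∞) < π.len → ∀ u', π.acts j ≠ RWAct.startRead u' q := by
        intro j h1 h2 u' hc
        have h3 := no_rs_of_concI_w (q := q) (a := RWAct.startWrite u q d) rfl (hcon j h1 h2)
        rw [hc] at h3
        exact h3 rfl
      obtain ⟨m₁, h11, h12, h13⟩ := wrts_empty hstep hj hInvP q k hNW
        (((π.states k).rg q).wrts).ncard k le_rfl hk le_rfl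
      obtain ⟨m₂, h21, h22, h23⟩ := rds_empty hstep hj hInvP q k hNR
        (((π.states m₁).rg q).rds).ncard m₁ h11 h12 le_rfl
      have hw2 : ((π.states m₂).rg q).wrts = ∅ := by
        have hsub := wrts_mono_range hstep q hNW m₁ h11 m₂ h21 h22
        rw [h13] at hsub
        exact Set.subset_empty_iff.mp hsub
      exact finish m₂ (h11.trans h21) h22 ⟨h23, hw2⟩
    · obtain ⟨m₁, h11, h12, h13⟩ := wrts_empty hstep hj hInvP q k hNW
        (((π.states k).rg q).wrts).ncard k le_rfl hk le_rfl
      exact finish m₁ h11 h12 h13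
  | read u q d => exact (ato_read_inv ((hsw.2 q).1 rfl)).elim
  | orderRead u q =>
    exact hcontra k le_rfl hk ⟨sw, mtrans_any_of_FR hsw (by simp) (by simp)⟩
  | finishRead u q d =>
    exact hcontra k le_rfl hk ⟨sw, mtrans_any_of_FR hsw (by simp) (by simp)⟩
  | orderWrite u q =>
    exact hcontra k le_rfl hk ⟨sw, mtrans_any_of_FR hsw (by simp) (by simp)⟩
  | finishWrite u q =>
    exact hcontra k le_rfl hk ⟨sw, mtrans_any_of_FR hsw (by simp) (by simp)⟩
  | crit u =>
    exact hcontra k le_rfl hk ⟨sw, mtrans_any_of_FR hsw (by simp) (by simp)⟩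
  | noncrit u =>
    exact hcontra k le_rfl hk ⟨sw, mtrans_any_of_FR hsw (by simp) (by simp)⟩
  | tloc u n =>
    exact hcontra k le_rfl hk ⟨sw, mtrans_any_of_FR hsw (by simp) (by simp)⟩
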